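/- Let M be a positive-integer-valued random variable and let (Y_j, X_j), j ≥ 1, be random variables with E[f(X_j) ε_j | M = m] possibly nonzero for ε_j = Y_j − μ(X_j). If Z given M = m is uniform on {1,...,m} and conditionally independent of the data given M, then E[f(X_Z) ε_Z] = E[(1/M) ∑_{j=1}^M f(X_j) ε_j], whereas the GEE-type sum satisfies E[∑_{j=1}^M f(X_j) ε_j] = E[M · E[(1/M)∑_{j=1}^M f(X_j)ε_j | M]]. In particular, if E[f(X_j) ε_j | M] = c(M) (the same for all j ≤ M), then the WCR score has mean E[c(M)] while the GEE score has mean E[M·c(M)]. -/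

import Mathlib

open MeasureTheory

/-- Splitting an integral of `H (W ω) ω` along the finitely many values of `W`. -/
lemma split_integral {Ω : Type*} [MeasurableSpace Ω] (μ : Measure Ω)
    (N : ℕ) (W : Ω → ℕ) (hW : Measurable W) (hWr : ∀ ω, W ω ∈ Finset.Icc 1 N)
    (H : ℕ → Ω → ℝ) (hH : ∀ m, IntegrableOn (H m) {ω | W ω = m} μ) :
    ∫ ω, H (W ω) ω ∂μ = ∑ m ∈ Finset.Icc 1 N, ∫ ω in {ω | W ω = m}, H m ω ∂μ := by
  have hmeas : ∀ m : ℕ, MeasurableSet {ω | W ω = m} := fun m =>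
    hW (measurableSet_singleton m)
  have heq : ∀ ω, H (W ω) ω
      = ∑ m ∈ Finset.Icc 1 N, Set.indicator {ω' | W ω' = m} (H m) ω := by
    intro ω
    rw [Finset.sum_eq_single (W ω)]
    · exact (Set.indicator_of_mem (by simp) _).symm
    · intro m _ hm
      exact Set.indicator_of_notMem (by simpa using (Ne.symm hm)) _
    · intro h; exact absurd (hWr ω) h
  calc ∫ ω, H (W ω) ω ∂μ
      = ∫ ω, ∑ m ∈ Finset.Icc 1 N, Set.indicator {ω' | W ω' = m} (H m) ω ∂μ := by
        simp_rw [heq]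
    _ = ∑ m ∈ Finset.Icc 1 N, ∫ ω, Set.indicator {ω' | W ω' = m} (H m) ω ∂μ := by
        refine integral_finset_sum _ fun m _ => ?_
        exact (integrable_indicator_iff (hmeas m)).2 (hH m)
    _ = ∑ m ∈ Finset.Icc 1 N, ∫ ω in {ω | W ω = m}, H m ω ∂μ := by
        exact Finset.sum_congr rfl fun m _ => integral_indicator (hmeas m)

/-- Informative cluster size: with `g j ω = f(X_j(ω)) ε_j(ω)` the per-observation score,
`Z` uniform on `{1,...,M}` given `M` and conditionally independent of the data given `M`,
the WCR score `f(X_Z) ε_Z` has mean `E[(1/M) ∑_{j≤M} f(X_j) ε_j]`, the GEE score has mean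
`E[M ⋅ E[(1/M)∑_{j≤M} f(X_j)ε_j | M]]`; in particular, if `E[f(X_j)ε_j | M] = c(M)` for all
`j ≤ M`, the WCR score has mean `E[c(M)]` while the GEE score has mean `E[M⋅c(M)]`. -/
theorem wcr_vs_gee_score_means
    {Ω : Type*} [MeasurableSpace Ω] (μ : Measure Ω) [IsProbabilityMeasure μ]
    (N : ℕ) (M Z : Ω → ℕ) (hMmeas : Measurable M) (hZmeas : Measurable Z)
    (X Y : ℕ → Ω → ℝ) (f muF : ℝ → ℝ) (c : ℕ → ℝ)
    (g : ℕ → Ω → ℝ)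
    (hg : ∀ j ω, g j ω = f (X j ω) * (Y j ω - muF (X j ω)))
    (hgmeas : ∀ j, Measurable (g j))
    (hgint : ∀ j, Integrable (g j) μ)
    (hMrange : ∀ ω, M ω ∈ Finset.Icc 1 N)
    (hZrange : ∀ ω, Z ω ∈ Finset.Icc 1 (M ω))
    -- `Z` given `M = m` is uniform on `{1,...,m}` and conditionally independent of the data:
    (hZcond : ∀ m ∈ Finset.Icc 1 N, ∀ j ∈ Finset.Icc 1 m,
      ∫ ω in {ω | M ω = m ∧ Z ω = j}, g j ω ∂μ
        = (1 / m : ℝ) * ∫ ω in {ω | M ω = m}, g j ω ∂μ)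
    -- `E[f(X_j) ε_j | M] = c(M)`, the same for all `j ≤ M`:
    (hc : ∀ m ∈ Finset.Icc 1 N, ∀ j ∈ Finset.Icc 1 m,
      ∫ ω in {ω | M ω = m}, g j ω ∂μ = c m * (μ {ω | M ω = m}).toReal) :
    (∫ ω, g (Z ω) ω ∂μ
        = ∫ ω, (1 / (M ω) : ℝ) * ∑ j ∈ Finset.Icc 1 (M ω), g j ω ∂μ)
    ∧ (∫ ω, (∑ j ∈ Finset.Icc 1 (M ω), g j ω) ∂μ
        = ∫ ω, (M ω : ℝ) * ((1 / (M ω) : ℝ) * ∑ j ∈ Finset.Icc 1 (M ω), c (M ω)) ∂μ)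
    ∧ (∫ ω, (1 / (M ω) : ℝ) * ∑ j ∈ Finset.Icc 1 (M ω), g j ω ∂μ = ∫ ω, c (M ω) ∂μ)
    ∧ (∫ ω, (∑ j ∈ Finset.Icc 1 (M ω), g j ω) ∂μ = ∫ ω, (M ω : ℝ) * c (M ω) ∂μ) := by
  have hAmeas : ∀ m : ℕ, MeasurableSet {ω | M ω = m} := fun m =>
    hMmeas (measurableSet_singleton m)
  have hZr : ∀ ω, Z ω ∈ Finset.Icc 1 N := by
    intro ω
    have h1 := hZrange ω; have h2 := hMrange ω
    simp only [Finset.mem_Icc] at *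
    omega
  -- abbreviation
  set A : ℕ → Set Ω := fun m => {ω | M ω = m} with hA
  -- value of the averaged integrand on each slice
  have key1 : ∀ m ∈ Finset.Icc 1 N,
      ∫ ω in A m, (1 / m : ℝ) * ∑ j ∈ Finset.Icc 1 m, g j ω ∂μ
        = ∑ j ∈ Finset.Icc 1 m, (1 / m : ℝ) * ∫ ω in A m, g j ω ∂μ := by
    intro m _
    rw [integral_const_mul, integral_finset_sum _ (fun j _ => (hgint j).integrableOn),
      Finset.mul_sum]
  -- Part 1 LHS
  have p1L : ∫ ω, g (Z ω) ω ∂μ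
      = ∑ m ∈ Finset.Icc 1 N, ∑ j ∈ Finset.Icc 1 m,
          (1 / m : ℝ) * ∫ ω in A m, g j ω ∂μ := by
    rw [split_integral μ N Z hZmeas hZr g (fun j => (hgint j).integrableOn)]
    have step : ∀ j : ℕ, ∫ ω in {ω | Z ω = j}, g j ω ∂μ
        = ∑ m ∈ Finset.Icc 1 N, ∫ ω in {ω | M ω = m ∧ Z ω = j}, g j ω ∂μ := by
      intro j
      have hZj : MeasurableSet {ω | Z ω = j} := hZmeas (measurableSet_singleton j)
      have : ∫ ω in {ω | Z ω = j}, g j ω ∂μ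
          = ∫ ω, Set.indicator {ω | Z ω = j} (g j) ω ∂μ :=
        (integral_indicator hZj).symm
      rw [this, split_integral μ N M hMmeas hMrange
        (fun _ ω => Set.indicator {ω | Z ω = j} (g j) ω)
        (fun m => (((integrable_indicator_iff
          hZj).2 (hgint j).integrableOn)).integrableOn)]
      refine Finset.sum_congr rfl fun m _ => ?_
      rw [setIntegral_indicator hZj,
        show {ω | M ω = m} ∩ {ω | Z ω = j} = {ω | M ω = m ∧ Z ω = j} from by
          ext ω; simp [Set.mem_setOf_eq]]
    simp_rw [step]
    rw [Finset.sum_comm]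
    refine Finset.sum_congr rfl fun m hm => ?_
    have hsub : Finset.Icc 1 m ⊆ Finset.Icc 1 N := by
      simp only [Finset.mem_Icc] at hm ⊢
      exact Finset.Icc_subset_Icc le_rfl hm.2
    rw [← Finset.sum_subset hsub]
    · exact Finset.sum_congr rfl fun j hj => hZcond m hm j hj
    · intro j _ hj
      have hempty : {ω | M ω = m ∧ Z ω = j} = (∅ : Set Ω) := by
        ext ω
        simp only [Set.mem_setOf_eq, Set.mem_empty_iff_false, iff_false, not_and]
        intro hMω hZω
        have := hZrange ω
        simp only [Finset.mem_Icc] at this hj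
        omega
      rw [hempty]
      simp
  -- Part 1 RHS = Part 3 LHS
  have p1R : ∫ ω, (1 / (M ω) : ℝ) * ∑ j ∈ Finset.Icc 1 (M ω), g j ω ∂μ
      = ∑ m ∈ Finset.Icc 1 N, ∑ j ∈ Finset.Icc 1 m,
          (1 / m : ℝ) * ∫ ω in A m, g j ω ∂μ := by
    rw [split_integral μ N M hMmeas hMrange
      (fun m ω => (1 / m : ℝ) * ∑ j ∈ Finset.Icc 1 m, g j ω)
      (fun m => (Integrable.const_mul
        (integrable_finset_sum _ (fun j _ => hgint j)) _).integrableOn)]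
    exact Finset.sum_congr rfl key1
  -- sum LHS (GEE score)
  have p2L : ∫ ω, (∑ j ∈ Finset.Icc 1 (M ω), g j ω) ∂μ
      = ∑ m ∈ Finset.Icc 1 N, ∑ j ∈ Finset.Icc 1 m, ∫ ω in A m, g j ω ∂μ := by
    rw [split_integral μ N M hMmeas hMrange
      (fun m ω => ∑ j ∈ Finset.Icc 1 m, g j ω)
      (fun m => (integrable_finset_sum _ (fun j _ => hgint j)).integrableOn)]
    exact Finset.sum_congr rfl fun m _ =>
      integral_finset_sum _ (fun j _ => (hgint j).integrableOn)
  -- simple-function integrals of functions of M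
  have pconst : ∀ (φ : ℕ → ℝ), ∫ ω, φ (M ω) ∂μ
      = ∑ m ∈ Finset.Icc 1 N, (μ (A m)).toReal * φ m := by
    intro φ
    rw [split_integral μ N M hMmeas hMrange (fun m _ => φ m)
      (fun m => (integrable_const _).integrableOn)]
    exact Finset.sum_congr rfl fun m _ => by rw [setIntegral_const]; simp; exact Or.inl rfl
  -- Using hc
  have hm1 : ∀ m ∈ Finset.Icc 1 N, (1 : ℝ) ≤ (m : ℝ) := by
    intro m hm; simp only [Finset.mem_Icc] at hm; exact_mod_cast hm.1
  have hsum_c : ∀ m ∈ Finset.Icc 1 N,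
      ∑ j ∈ Finset.Icc 1 m, (1 / m : ℝ) * ∫ ω in A m, g j ω ∂μ
        = c m * (μ (A m)).toReal := by
    intro m hm
    have hme : (m : ℝ) ≠ 0 := by linarith [hm1 m hm]
    calc ∑ j ∈ Finset.Icc 1 m, (1 / m : ℝ) * ∫ ω in A m, g j ω ∂μ
        = ∑ j ∈ Finset.Icc 1 m, (1 / m : ℝ) * (c m * (μ (A m)).toReal) :=
          Finset.sum_congr rfl fun j hj => by rw [hc m hm j hj]
      _ = (m : ℝ) * ((1 / m : ℝ) * (c m * (μ (A m)).toReal)) := by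
          rw [Finset.sum_const, Nat.card_Icc]; simp [nsmul_eq_mul]
      _ = c m * (μ (A m)).toReal := by field_simp
  have hsum_c' : ∀ m ∈ Finset.Icc 1 N,
      ∑ j ∈ Finset.Icc 1 m, ∫ ω in A m, g j ω ∂μ
        = (m : ℝ) * (c m * (μ (A m)).toReal) := by
    intro m hm
    calc ∑ j ∈ Finset.Icc 1 m, ∫ ω in A m, g j ω ∂μ
        = ∑ j ∈ Finset.Icc 1 m, (c m * (μ (A m)).toReal) :=
          Finset.sum_congr rfl fun j hj => hc m hm j hj
      _ = (m : ℝ) * (c m * (μ (A m)).toReal) := by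
          rw [Finset.sum_const, Nat.card_Icc]; simp [nsmul_eq_mul]
  refine ⟨p1L.trans p1R.symm, ?_, ?_, ?_⟩
  · -- part 2
    have : (fun ω => (M ω : ℝ) * ((1 / (M ω) : ℝ) * ∑ j ∈ Finset.Icc 1 (M ω), c (M ω)))
        = fun ω => (fun m : ℕ => (m : ℝ) * ((1 / m : ℝ) * ∑ j ∈ Finset.Icc 1 m, c m)) (M ω) := rfl
    rw [p2L, this, pconst (fun m : ℕ => (m : ℝ) * ((1 / m : ℝ) * ∑ j ∈ Finset.Icc 1 m, c m))]
    refine Finset.sum_congr rfl fun m hm => ?_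
    have hme : (m : ℝ) ≠ 0 := by linarith [hm1 m hm]
    rw [hsum_c' m hm, Finset.sum_const, Nat.card_Icc]
    simp only [Nat.add_sub_cancel, nsmul_eq_mul]
    field_simp
  · -- part 3
    rw [p1R, pconst]
    refine Finset.sum_congr rfl fun m hm => ?_
    rw [hsum_c m hm]; ring
  · -- part 4
    have : (fun ω => (M ω : ℝ) * c (M ω))
        = fun ω => (fun m : ℕ => (m : ℝ) * c m) (M ω) := rfl
    rw [p2L, this, pconst (fun m : ℕ => (m : ℝ) * c m)]
    refine Finset.sum_congr rfl fun m hm => ?_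
    rw [hsum_c' m hm]; ring
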